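/- Let φ be an LTL formula and w an infinite word. Then w ⊨ FGφ if and only if there exists a set G of G-subformulas of φ such that: (1) for almost every i ∈ ℕ there exists j ≥ i with ⋀_{Gψ∈G} Gψ ⊨_p afG(φ, w[i..j]); and (2) w ⊨ FGψ for every Gψ ∈ G. -/

import Mathlib

namespace LTLF

/-- LTL formulas in negation normal form over atomic propositions `Ap`. -/
inductive LTL (Ap : Type) : Type
  | tt : LTL Ap
  | ff : LTL Ap
  | atom : Ap → LTL Ap
  | natom : Ap → LTL Ap
  | and : LTL Ap → LTL Ap → LTL Ap
  | or : LTL Ap → LTL Ap → LTL Ap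
  | next : LTL Ap → LTL Ap
  | fut : LTL Ap → LTL Ap
  | glob : LTL Ap → LTL Ap
  | untl : LTL Ap → LTL Ap → LTL Ap

variable {Ap : Type}

/-- Infinite words over the alphabet `2^Ap`. -/
abbrev Word (Ap : Type) := ℕ → Set Ap

/-- The suffix `w_k`. -/
def suffix (w : Word Ap) (k : ℕ) : Word Ap := fun i => w (i + k)

/-- Standard LTL semantics on infinite words. -/
def Sat : LTL Ap → Word Ap → Prop
  | .tt, _ => True
  | .ff, _ => False
  | .atom a, w => a ∈ w 0
  | .natom a, w => a ∉ w 0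
  | .and φ ψ, w => Sat φ w ∧ Sat ψ w
  | .or φ ψ, w => Sat φ w ∨ Sat ψ w
  | .next φ, w => Sat φ (suffix w 1)
  | .fut φ, w => ∃ k, Sat φ (suffix w k)
  | .glob φ, w => ∀ k, Sat φ (suffix w k)
  | .untl φ ψ, w => ∃ k, Sat ψ (suffix w k) ∧ ∀ j < k, Sat φ (suffix w j)

open Classical in
/-- The "after function" `af(φ, ν)`. -/
noncomputable def af : LTL Ap → Set Ap → LTL Ap
  | .tt, _ => .tt
  | .ff, _ => .ff
  | .atom a, ν => if a ∈ ν then .tt else .ff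
  | .natom a, ν => if a ∈ ν then .ff else .tt
  | .and φ ψ, ν => .and (af φ ν) (af ψ ν)
  | .or φ ψ, ν => .or (af φ ν) (af ψ ν)
  | .next φ, _ => φ
  | .fut φ, ν => .or (af φ ν) (.fut φ)
  | .glob φ, ν => .and (af φ ν) (.glob φ)
  | .untl φ ψ, ν => .or (af ψ ν) (.and (af φ ν) (.untl φ ψ))

/-- `af` extended to finite words. -/
noncomputable def afw (φ : LTL Ap) (u : List (Set Ap)) : LTL Ap := u.foldl af φ

open Classical in
/-- The variant `afG`, identical to `af` except `afG(Gφ, ν) = Gφ`. -/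
noncomputable def afG : LTL Ap → Set Ap → LTL Ap
  | .tt, _ => .tt
  | .ff, _ => .ff
  | .atom a, ν => if a ∈ ν then .tt else .ff
  | .natom a, ν => if a ∈ ν then .ff else .tt
  | .and φ ψ, ν => .and (afG φ ν) (afG ψ ν)
  | .or φ ψ, ν => .or (afG φ ν) (afG ψ ν)
  | .next φ, _ => φ
  | .fut φ, ν => .or (afG φ ν) (.fut φ)
  | .glob φ, _ => .glob φ
  | .untl φ ψ, ν => .or (afG ψ ν) (.and (afG φ ν) (.untl φ ψ))

/-- `afG` extended to finite words. -/
noncomputable def afGw (φ : LTL Ap) (u : List (Set Ap)) : LTL Ap := u.foldl afG φ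

/-- The finite infix `w[i..j] = w[i] w[i+1] ⋯ w[j]`. -/
def infixW (w : Word Ap) (i j : ℕ) : List (Set Ap) :=
  (List.range (j + 1 - i)).map (fun k => w (i + k))

/-- The finite prefix `w[0..i]`. -/
def prefixW (w : Word Ap) (i : ℕ) : List (Set Ap) := infixW w 0 i

/-- Concatenation of a finite word with an infinite word. -/
def cat (u : List (Set Ap)) (w : Word Ap) : Word Ap :=
  fun k => if h : k < u.length then u.get ⟨k, h⟩ else w (k - u.length)

/-- Propositional evaluation of a formula under a valuation `v`, treating
literals and temporal formulas (`X`, `F`, `G`, `U`) as opaque propositional atoms. -/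
def propSat (v : LTL Ap → Prop) : LTL Ap → Prop
  | .tt => True
  | .ff => False
  | .and φ ψ => propSat v φ ∧ propSat v ψ
  | .or φ ψ => propSat v φ ∨ propSat v ψ
  | φ => v φ

/-- A valuation is consistent on literals: `a` and `¬a` get complementary values. -/
def LitConsistent (v : LTL Ap → Prop) : Prop :=
  ∀ a : Ap, v (.atom a) ↔ ¬ v (.natom a)

/-- Propositional implication `φ ⊨_p ψ`. -/
def PropImp (φ ψ : LTL Ap) : Prop :=
  ∀ v : LTL Ap → Prop, LitConsistent v → propSat v φ → propSat v ψ

/-- Propositional equivalence `φ ≡_p ψ`. -/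
def PropEquiv (φ ψ : LTL Ap) : Prop :=
  ∀ v : LTL Ap → Prop, LitConsistent v → (propSat v φ ↔ propSat v ψ)

/-- `⋀_{χ ∈ H} χ ⊨_p ψ` : the (possibly infinite) conjunction of the
hypotheses `H` propositionally implies `ψ`. -/
def PropImpSet (H : Set (LTL Ap)) (ψ : LTL Ap) : Prop :=
  ∀ v : LTL Ap → Prop, LitConsistent v → (∀ χ ∈ H, propSat v χ) → propSat v ψ

/-- The list of subformulas of a formula. -/
def subfs : LTL Ap → List (LTL Ap)
  | .tt => [.tt]
  | .ff => [.ff]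
  | .atom a => [.atom a]
  | .natom a => [.natom a]
  | .and φ ψ => .and φ ψ :: (subfs φ ++ subfs ψ)
  | .or φ ψ => .or φ ψ :: (subfs φ ++ subfs ψ)
  | .next φ => .next φ :: subfs φ
  | .fut φ => .fut φ :: subfs φ
  | .glob φ => .glob φ :: subfs φ
  | .untl φ ψ => .untl φ ψ :: (subfs φ ++ subfs ψ)

/-- `Gψ` is a `G`-subformula of `φ`. -/
def GSub (φ ψ : LTL Ap) : Prop := LTL.glob ψ ∈ subfs φ

/-- A formula is `G`-free if it contains no occurrence of `G`. -/
def GFree : LTL Ap → Prop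
  | .glob _ => False
  | .and φ ψ => GFree φ ∧ GFree ψ
  | .or φ ψ => GFree φ ∧ GFree ψ
  | .next φ => GFree φ
  | .fut φ => GFree φ
  | .untl φ ψ => GFree φ ∧ GFree ψ
  | _ => True

/-- `ind(w, ψ)`: the least index `j` with `w_j ⊨ Gψ`. -/
noncomputable def ind (w : Word Ap) (ψ : LTL Ap) : ℕ :=
  sInf {j | Sat (.glob ψ) (suffix w j)}

/-! ### Auxiliary definitions and lemmas -/

/-- Prepending a letter to an infinite word. -/
def consW (ν : Set Ap) (x : Word Ap) : Word Ap := fun k => match k with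
  | 0 => ν
  | k + 1 => x k

/-- The prefix of length `n` of an infinite word, as a finite word. -/
def pfx (x : Word Ap) (n : ℕ) : List (Set Ap) := (List.range n).map x

/-- The "semantic-except-`G`" valuation: `G`-formulas are evaluated by
membership in `G`, everything else semantically on `x`. -/
def mval (G : Set (LTL Ap)) (x : Word Ap) : LTL Ap → Prop
  | .glob χ => χ ∈ G
  | η => Sat η x

lemma suffix_zero (x : Word Ap) : suffix x 0 = x := rfl

lemma suffix_suffix (x : Word Ap) (a b : ℕ) : suffix (suffix x a) b = suffix x (b + a) := by
  funext i; simp [suffix, Nat.add_assoc]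

lemma suffix_consW (ν : Set Ap) (x : Word Ap) : suffix (consW ν x) 1 = x := rfl

lemma suffix_consW_succ (ν : Set Ap) (x : Word Ap) (k : ℕ) :
    suffix (consW ν x) (k + 1) = suffix x k := rfl

lemma consW_head_tail (x : Word Ap) : consW (x 0) (suffix x 1) = x := by
  funext k; cases k <;> rfl

lemma sat_glob_suffix {χ : LTL Ap} {x : Word Ap} (h : Sat (.glob χ) x) (k : ℕ) :
    Sat (.glob χ) (suffix x k) := by
  intro m; rw [suffix_suffix]; exact h (m + k)

lemma sat_glob_mono {χ : LTL Ap} {w : Word Ap} {a b : ℕ} (hab : a ≤ b)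
    (h : Sat (.glob χ) (suffix w a)) : Sat (.glob χ) (suffix w b) := by
  have h2 := sat_glob_suffix h (b - a)
  rw [suffix_suffix, Nat.sub_add_cancel hab] at h2
  exact h2

lemma afGw_nil (ξ : LTL Ap) : afGw ξ [] = ξ := rfl

lemma afGw_cons (ξ : LTL Ap) (ν : Set Ap) (u : List (Set Ap)) :
    afGw ξ (ν :: u) = afGw (afG ξ ν) u := rfl

lemma afGw_append (ξ : LTL Ap) (u u' : List (Set Ap)) :
    afGw ξ (u ++ u') = afGw (afGw ξ u) u' := List.foldl_append

lemma afGw_and (α β : LTL Ap) (u : List (Set Ap)) :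
    afGw (.and α β) u = .and (afGw α u) (afGw β u) := by
  induction u generalizing α β with
  | nil => rfl
  | cons ν u ih => rw [afGw_cons, afGw_cons α, afGw_cons β]; exact ih _ _

lemma afGw_or (α β : LTL Ap) (u : List (Set Ap)) :
    afGw (.or α β) u = .or (afGw α u) (afGw β u) := by
  induction u generalizing α β with
  | nil => rfl
  | cons ν u ih => rw [afGw_cons, afGw_cons α, afGw_cons β]; exact ih _ _

lemma afGw_glob (ξ : LTL Ap) (u : List (Set Ap)) : afGw (.glob ξ) u = .glob ξ := by
  induction u with
  | nil => rfl
  | cons ν u ih => rw [afGw_cons]; exact ih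

lemma afGw_fut_cons (ξ : LTL Ap) (ν : Set Ap) (u : List (Set Ap)) :
    afGw (.fut ξ) (ν :: u) = .or (afGw ξ (ν :: u)) (afGw (.fut ξ) u) := by
  rw [afGw_cons, show afG (.fut ξ) ν = .or (afG ξ ν) (.fut ξ) from rfl, afGw_or, ← afGw_cons]

lemma afGw_untl_cons (α β : LTL Ap) (ν : Set Ap) (u : List (Set Ap)) :
    afGw (.untl α β) (ν :: u) =
      .or (afGw β (ν :: u)) (.and (afGw α (ν :: u)) (afGw (.untl α β) u)) := by
  rw [afGw_cons, show afG (.untl α β) ν = .or (afG β ν) (.and (afG α ν) (.untl α β)) from rfl,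
    afGw_or, afGw_and, ← afGw_cons, ← afGw_cons]

lemma litConsistent_mval (G : Set (LTL Ap)) (x : Word Ap) : LitConsistent (mval G x) := by
  intro a
  show Sat (.atom a) x ↔ ¬ Sat (.natom a) x
  simp [Sat]

lemma propSat_mval_sat {G : Set (LTL Ap)} {x : Word Ap}
    (hg : ∀ χ ∈ G, Sat (.glob χ) x) :
    ∀ ξ : LTL Ap, propSat (mval G x) ξ → Sat ξ x := by
  intro ξ
  induction ξ with
  | tt => intro _; trivial
  | ff => intro h; exact h.elim
  | atom a => intro h; exact h
  | natom a => intro h; exact h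
  | and α β ihα ihβ => intro h; exact ⟨ihα h.1, ihβ h.2⟩
  | or α β ihα ihβ => intro h; exact h.elim (fun h => Or.inl (ihα h)) (fun h => Or.inr (ihβ h))
  | next α _ => intro h; exact h
  | fut α _ => intro h; exact h
  | glob α _ => intro h; exact hg α h
  | untl α β _ _ => intro h; exact h

lemma propSat_afG_consW {G : Set (LTL Ap)} (ν : Set Ap) (x : Word Ap)
    (hg : ∀ χ ∈ G, Sat (.glob χ) (consW ν x)) :
    ∀ ξ : LTL Ap, propSat (mval G x) (afG ξ ν) → propSat (mval G (consW ν x)) ξ := by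
  have hg' : ∀ χ ∈ G, Sat (.glob χ) x := by
    intro χ hχ
    have := sat_glob_suffix (hg χ hχ) 1
    rwa [suffix_consW] at this
  intro ξ
  induction ξ with
  | tt => intro _; trivial
  | ff => intro h; exact h.elim
  | atom a =>
      intro h
      by_cases hav : a ∈ ν
      · exact hav
      · simp only [afG] at h
        rw [if_neg hav] at h
        exact h.elim
  | natom a =>
      intro h
      by_cases hav : a ∈ ν
      · simp only [afG] at h
        rw [if_pos hav] at h
        exact h.elim
      · exact hav
  | and α β ihα ihβ => intro h; exact ⟨ihα h.1, ihβ h.2⟩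
  | or α β ihα ihβ => intro h; exact h.elim (fun h => Or.inl (ihα h)) (fun h => Or.inr (ihβ h))
  | next α _ =>
      intro h
      show Sat α (suffix (consW ν x) 1)
      rw [suffix_consW]
      exact propSat_mval_sat hg' α h
  | fut α ihα =>
      intro h
      rcases h with h | h
      · exact ⟨0, by rw [suffix_zero]; exact propSat_mval_sat hg α (ihα h)⟩
      · obtain ⟨k, hk⟩ := h
        exact ⟨k + 1, by rwa [suffix_consW_succ]⟩
  | glob α _ => intro h; exact h
  | untl α β ihα ihβ =>
      intro h
      rcases h with h | h
      · exact ⟨0, by rw [suffix_zero]; exact propSat_mval_sat hg β (ihβ h), fun j hj => absurd hj (by omega)⟩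
      · obtain ⟨h1, h2⟩ := h
        obtain ⟨k, hkβ, hkα⟩ := (h2 : Sat (.untl α β) x)
        refine ⟨k + 1, by rwa [suffix_consW_succ], ?_⟩
        intro j hj
        cases j with
        | zero => rw [suffix_zero]; exact propSat_mval_sat hg α (ihα h1)
        | succ j => rw [suffix_consW_succ]; exact hkα j (by omega)

lemma cat_nil (x : Word Ap) : cat ([] : List (Set Ap)) x = x := by
  funext k; simp [cat]

lemma cat_cons (ν : Set Ap) (u : List (Set Ap)) (x : Word Ap) :
    cat (ν :: u) x = consW ν (cat u x) := by
  funext k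
  cases k with
  | zero => simp [cat, consW]
  | succ k =>
      show cat (ν :: u) x (k + 1) = cat u x k
      by_cases h : k < u.length
      · rw [cat, cat, dif_pos h, dif_pos (by simpa using Nat.succ_lt_succ h)]
        rfl
      · rw [cat, cat, dif_neg h, dif_neg (by simp only [List.length_cons]; omega)]
        simp [Nat.succ_sub_succ]

lemma pfx_succ (x : Word Ap) (n : ℕ) : pfx x (n + 1) = x 0 :: pfx (suffix x 1) n := by
  rw [pfx, List.range_succ_eq_map, List.map_cons, List.map_map]
  rfl

lemma cat_pfx : ∀ (n : ℕ) (x : Word Ap), cat (pfx x n) (suffix x n) = x := by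
  intro n
  induction n with
  | zero => intro x; rw [show pfx x 0 = [] from rfl, suffix_zero, cat_nil]
  | succ n ih =>
      intro x
      rw [pfx_succ, cat_cons, show suffix x (n + 1) = suffix (suffix x 1) n from (suffix_suffix x 1 n).symm,
        ih, consW_head_tail]


lemma pfx_add (x : Word Ap) (a b : ℕ) :
    pfx x (a + b) = pfx x a ++ pfx (suffix x a) b := by
  simp only [pfx, List.range_add, List.map_append, List.map_map]
  congr 1
  apply List.map_congr_left
  intro k _
  simp [suffix, Function.comp, Nat.add_comm]

lemma propSat_afGw_cat {G : Set (LTL Ap)} :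
    ∀ (u : List (Set Ap)) (x : Word Ap) (ξ : LTL Ap),
      (∀ χ ∈ G, Sat (.glob χ) (cat u x)) → propSat (mval G x) (afGw ξ u) →
      propSat (mval G (cat u x)) ξ := by
  intro u
  induction u with
  | nil => intro x ξ _ h; rwa [cat_nil]
  | cons ν u ih =>
      intro x ξ hg h
      rw [cat_cons] at hg ⊢
      have hg' : ∀ χ ∈ G, Sat (.glob χ) (cat u x) := by
        intro χ hχ
        have := sat_glob_suffix (hg χ hχ) 1
        rwa [suffix_consW] at this
      exact propSat_afG_consW ν (cat u x) hg ξ (ih x (afG ξ ν) hg' h)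

lemma propSat_afG_val (v : LTL Ap → Prop) (ν : Set Ap) :
    ∀ ξ : LTL Ap, propSat (fun η => propSat v (afG η ν)) ξ ↔ propSat v (afG ξ ν) := by
  intro ξ
  induction ξ with
  | and α β ihα ihβ =>
      show propSat _ α ∧ propSat _ β ↔ propSat v (afG α ν) ∧ propSat v (afG β ν)
      rw [ihα, ihβ]
  | or α β ihα ihβ =>
      show propSat _ α ∨ propSat _ β ↔ propSat v (afG α ν) ∨ propSat v (afG β ν)
      rw [ihα, ihβ]
  | _ => exact Iff.rfl

lemma propImpSet_afG {G : Set (LTL Ap)} {ξ : LTL Ap} {ν : Set Ap}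
    (h : PropImpSet (LTL.glob '' G) ξ) : PropImpSet (LTL.glob '' G) (afG ξ ν) := by
  intro v hv hH
  have hv' : LitConsistent (fun η => propSat v (afG η ν)) := by
    intro a
    show propSat v (afG (.atom a) ν) ↔ ¬ propSat v (afG (.natom a) ν)
    simp only [afG]
    by_cases hav : a ∈ ν
    · rw [if_pos hav, if_pos hav]
      show True ↔ ¬ False
      simp
    · rw [if_neg hav, if_neg hav]
      show False ↔ ¬ True
      simp
  have hH' : ∀ χ ∈ LTL.glob '' G, propSat (fun η => propSat v (afG η ν)) χ := by
    rintro χ ⟨ψ, hψ, rfl⟩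
    exact hH _ ⟨ψ, hψ, rfl⟩
  have := h _ hv' hH'
  rwa [propSat_afG_val] at this

lemma propImpSet_afGw {G : Set (LTL Ap)} {ξ : LTL Ap}
    (h : PropImpSet (LTL.glob '' G) ξ) (u : List (Set Ap)) :
    PropImpSet (LTL.glob '' G) (afGw ξ u) := by
  induction u generalizing ξ with
  | nil => exact h
  | cons ν u ih => exact ih (propImpSet_afG h)

lemma propImpSet_pfx_mono {G : Set (LTL Ap)} {ξ : LTL Ap} {x : Word Ap} {a b : ℕ}
    (hab : a ≤ b) (h : PropImpSet (LTL.glob '' G) (afGw ξ (pfx x a))) :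
    PropImpSet (LTL.glob '' G) (afGw ξ (pfx x b)) := by
  rw [show b = a + (b - a) by omega, pfx_add, afGw_append]
  exact propImpSet_afGw h _

lemma propImpSet_fut_of {G : Set (LTL Ap)} {α : LTL Ap} {y : Word Ap} {m : ℕ}
    (h : PropImpSet (LTL.glob '' G) (afGw α (pfx y (m + 1)))) :
    PropImpSet (LTL.glob '' G) (afGw (.fut α) (pfx y (m + 1))) := by
  rw [pfx_succ, afGw_fut_cons, ← pfx_succ]
  intro v hv hH
  exact Or.inl (h v hv hH)

lemma propImpSet_fut_shift {G : Set (LTL Ap)} {α : LTL Ap} :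
    ∀ (k : ℕ) (x : Word Ap) (m : ℕ),
      PropImpSet (LTL.glob '' G) (afGw (.fut α) (pfx (suffix x k) m)) →
      PropImpSet (LTL.glob '' G) (afGw (.fut α) (pfx x (k + m))) := by
  intro k
  induction k with
  | zero => intro x m h; rw [Nat.zero_add]; rwa [suffix_zero] at h
  | succ k ih =>
      intro x m h
      have h1 : PropImpSet (LTL.glob '' G) (afGw (.fut α) (pfx (suffix x 1) (k + m))) := by
        apply ih
        rwa [suffix_suffix]
      rw [show k + 1 + m = (k + m) + 1 by omega, pfx_succ, afGw_fut_cons]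
      intro v hv hH
      exact Or.inr (h1 v hv hH)

lemma key_lemma {G : Set (LTL Ap)} :
    ∀ (ξ : LTL Ap) (x : Word Ap), Sat ξ x →
      (∀ χ, LTL.glob χ ∈ subfs ξ → ∀ k, Sat (.glob χ) (suffix x k) → χ ∈ G) →
      ∃ n, 1 ≤ n ∧ PropImpSet (LTL.glob '' G) (afGw ξ (pfx x n)) := by
  intro ξ
  induction ξ with
  | tt =>
      intro x _ _
      refine ⟨1, le_rfl, fun v _ _ => ?_⟩
      show propSat v (afGw .tt [x 0])
      trivial
  | ff => intro x hx _; exact hx.elim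
  | atom a =>
      intro x hx _
      refine ⟨1, le_rfl, fun v _ _ => ?_⟩
      show propSat v (afG (.atom a) (x 0))
      simp only [afG]
      rw [if_pos (show a ∈ x 0 from hx)]
      trivial
  | natom a =>
      intro x hx _
      refine ⟨1, le_rfl, fun v _ _ => ?_⟩
      show propSat v (afG (.natom a) (x 0))
      simp only [afG]
      rw [if_neg (show a ∉ x 0 from hx)]
      trivial
  | and α β ihα ihβ =>
      intro x hx hcl
      obtain ⟨n₁, hn₁, h₁⟩ := ihα x hx.1 (fun χ hχ => hcl χ (by
        simp only [subfs, List.mem_cons, List.mem_append]; tauto))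
      obtain ⟨n₂, hn₂, h₂⟩ := ihβ x hx.2 (fun χ hχ => hcl χ (by
        simp only [subfs, List.mem_cons, List.mem_append]; tauto))
      refine ⟨max n₁ n₂, by omega, ?_⟩
      have h₁' := propImpSet_pfx_mono (le_max_left n₁ n₂) h₁
      have h₂' := propImpSet_pfx_mono (le_max_right n₁ n₂) h₂
      rw [afGw_and]
      intro v hv hH
      exact ⟨h₁' v hv hH, h₂' v hv hH⟩
  | or α β ihα ihβ =>
      intro x hx hcl
      rcases hx with hx | hx
      · obtain ⟨n, hn, h⟩ := ihα x hx (fun χ hχ => hcl χ (by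
          simp only [subfs, List.mem_cons, List.mem_append]; tauto))
        refine ⟨n, hn, ?_⟩
        rw [afGw_or]
        intro v hv hH
        exact Or.inl (h v hv hH)
      · obtain ⟨n, hn, h⟩ := ihβ x hx (fun χ hχ => hcl χ (by
          simp only [subfs, List.mem_cons, List.mem_append]; tauto))
        refine ⟨n, hn, ?_⟩
        rw [afGw_or]
        intro v hv hH
        exact Or.inr (h v hv hH)
  | next α ihα =>
      intro x hx hcl
      obtain ⟨n, hn, h⟩ := ihα (suffix x 1) hx (fun χ hχ k hk => hcl χ
        (by simp only [subfs, List.mem_cons]; tauto) (k + 1)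
        (by rwa [suffix_suffix] at hk))
      refine ⟨n + 1, by omega, ?_⟩
      rw [pfx_succ, afGw_cons]
      exact h
  | fut α ihα =>
      intro x hx hcl
      obtain ⟨k, hk⟩ := hx
      obtain ⟨m, hm, h⟩ := ihα (suffix x k) hk (fun χ hχ k' hk' => hcl χ
        (by simp only [subfs, List.mem_cons]; tauto) (k' + k)
        (by rwa [suffix_suffix] at hk'))
      obtain ⟨m', rfl⟩ : ∃ m', m = m' + 1 := ⟨m - 1, by omega⟩
      exact ⟨k + (m' + 1), by omega, propImpSet_fut_shift k x (m' + 1) (propImpSet_fut_of h)⟩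
  | glob α _ =>
      intro x hx hcl
      have hαG : α ∈ G := hcl α List.mem_cons_self 0 (by rwa [suffix_zero])
      refine ⟨1, le_rfl, fun v hv hH => ?_⟩
      rw [afGw_glob]
      exact hH _ ⟨α, hαG, rfl⟩
  | untl α β ihα ihβ =>
      intro x hx hcl
      obtain ⟨k, hkβ, hkα⟩ := hx
      induction k generalizing x with
      | zero =>
          rw [suffix_zero] at hkβ
          obtain ⟨m, hm, h⟩ := ihβ x hkβ (fun χ hχ => hcl χ (by
            simp only [subfs, List.mem_cons, List.mem_append]; tauto))
          obtain ⟨m', rfl⟩ : ∃ m', m = m' + 1 := ⟨m - 1, by omega⟩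
          refine ⟨m' + 1, by omega, ?_⟩
          rw [pfx_succ, afGw_untl_cons, ← pfx_succ]
          intro v hv hH
          exact Or.inl (h v hv hH)
      | succ k ihk =>
          have hα0 : Sat α x := by
            have := hkα 0 (by omega)
            rwa [suffix_zero] at this
          obtain ⟨n₁, hn₁, h₁⟩ := ihα x hα0 (fun χ hχ => hcl χ (by
            simp only [subfs, List.mem_cons, List.mem_append]; tauto))
          obtain ⟨n₂, hn₂, h₂⟩ := ihk (suffix x 1)
            (fun χ hχ k' hk' => hcl χ hχ (k' + 1) (by rwa [suffix_suffix] at hk'))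
            (by rw [suffix_suffix]; exact hkβ)
            (fun j hj => by rw [suffix_suffix]; exact hkα (j + 1) (by omega))
          refine ⟨max n₁ (n₂ + 1), by omega, ?_⟩
          have h₁' := propImpSet_pfx_mono (le_max_left n₁ (n₂ + 1)) h₁
          have h₂' : PropImpSet (LTL.glob '' G)
              (afGw (.untl α β) (pfx (suffix x 1) (max n₁ (n₂ + 1) - 1))) :=
            propImpSet_pfx_mono (by omega) h₂
          rw [show max n₁ (n₂ + 1) = (max n₁ (n₂ + 1) - 1) + 1 by omega] at h₁' ⊢
          rw [pfx_succ, afGw_untl_cons, ← pfx_succ]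
          rw [pfx_succ] at h₁'
          intro v hv hH
          exact Or.inr ⟨by rw [pfx_succ]; exact h₁' v hv hH, h₂' v hv hH⟩

lemma infixW_eq (w : Word Ap) (i j : ℕ) : infixW w i j = pfx (suffix w i) (j + 1 - i) := by
  simp only [infixW, pfx]
  apply List.map_congr_left
  intro k _
  simp [suffix, Nat.add_comm]

lemma finite_of_gsub {φ : LTL Ap} {G : Set (LTL Ap)} (h : ∀ ψ ∈ G, GSub φ ψ) :
    G.Finite := by
  have hsub : G ⊆ {ψ | ψ ∈ (subfs φ).filterMap
      (fun χ => match χ with | .glob ψ => some ψ | _ => none)} := by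
    intro ψ hψ
    simp only [Set.mem_setOf_eq, List.mem_filterMap]
    exact ⟨.glob ψ, h ψ hψ, rfl⟩
  exact Set.Finite.subset (List.finite_toSet _) hsub


/-- `w ⊨ FGφ` iff there is a set `G` of `G`-subformulas of `φ`
such that (1) the Mojmir automaton `M(φ, G)` accepts `w` and
(2) `w ⊨ FGψ` for every `Gψ ∈ G`. -/
theorem FG_iff_slave_accepts {Ap : Type} (φ : LTL Ap) (w : Word Ap) :
    Sat (LTL.fut (LTL.glob φ)) w ↔
      ∃ G : Set (LTL Ap), (∀ ψ ∈ G, GSub φ ψ) ∧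
        (∃ N : ℕ, ∀ i ≥ N, ∃ j ≥ i,
          PropImpSet (LTL.glob '' G) (afGw φ (infixW w i j))) ∧
        (∀ ψ ∈ G, Sat (LTL.fut (LTL.glob ψ)) w) := by
  constructor
  · -- forward direction
    rintro ⟨k₀, hk₀⟩
    refine ⟨{ψ | GSub φ ψ ∧ Sat (.fut (.glob ψ)) w}, fun ψ hψ => hψ.1, ⟨k₀, ?_⟩,
      fun ψ hψ => hψ.2⟩
    intro i hi
    have hφi : Sat φ (suffix w i) := by
      have := sat_glob_mono hi hk₀
      have := this 0
      rwa [suffix_zero] at this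
    have hcl : ∀ χ, LTL.glob χ ∈ subfs φ → ∀ k,
        Sat (.glob χ) (suffix (suffix w i) k) →
        χ ∈ {ψ | GSub φ ψ ∧ Sat (.fut (.glob ψ)) w} := by
      intro χ hχ k hk
      rw [suffix_suffix] at hk
      exact ⟨hχ, ⟨k + i, hk⟩⟩
    obtain ⟨n, hn, h⟩ := key_lemma φ (suffix w i) hφi hcl
    refine ⟨i + (n - 1), by omega, ?_⟩
    rw [infixW_eq, show i + (n - 1) + 1 - i = n by omega]
    exact h
  · -- backward direction
    rintro ⟨G, hsub, ⟨N, hN⟩, hFG⟩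
    have hfin : G.Finite := finite_of_gsub hsub
    set f : LTL Ap → ℕ := fun ψ => sInf {k | Sat (.glob ψ) (suffix w k)} with hf
    have hfsat : ∀ ψ ∈ G, Sat (.glob ψ) (suffix w (f ψ)) := by
      intro ψ hψ
      exact Nat.sInf_mem (hFG ψ hψ)
    set M := hfin.toFinset.sup f with hM
    have hfM : ∀ ψ ∈ G, f ψ ≤ M := fun ψ hψ =>
      Finset.le_sup (hfin.mem_toFinset.mpr hψ)
    refine ⟨max N M, ?_⟩
    intro k
    rw [suffix_suffix]
    set i := k + max N M with hi
    obtain ⟨j, hj, himp⟩ := hN i (by omega)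
    rw [infixW_eq] at himp
    set x := suffix (suffix w i) (j + 1 - i) with hx
    have hcat : cat (pfx (suffix w i) (j + 1 - i)) x = suffix w i := cat_pfx _ _
    have hg : ∀ χ ∈ G, Sat (.glob χ) (cat (pfx (suffix w i) (j + 1 - i)) x) := by
      intro χ hχ
      rw [hcat]
      exact sat_glob_mono (by have := hfM χ hχ; omega) (hfsat χ hχ)
    have hp : propSat (mval G x) (afGw φ (pfx (suffix w i) (j + 1 - i))) := by
      apply himp (mval G x) (litConsistent_mval G x)
      rintro χ ⟨ψ, hψ, rfl⟩
      exact hψ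
    have := propSat_afGw_cat _ x φ hg hp
    rw [hcat] at this hg
    exact propSat_mval_sat hg φ this

end LTLF
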